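/- There exist graphs G_1 and G_2 such that λ(G_1) < λ(G_2) but λ(G_1 ∨ K_1) > λ(G_2 ∨ K_1), where λ denotes the adjacency spectral radius. Concretely, G_1 = K_3 ∨ 5K_1 and G_2 = K_1 ∨ (K_5 ∪ 2K_1) satisfy λ(G_1) = 5 < λ(G_2), yet λ(G_1 ∨ K_1) > λ(G_2 ∨ K_1). -/

import Mathlib

/-- The adjacency spectral radius of a finite simple graph: the supremum of the
(real) spectrum of its adjacency matrix, i.e. its largest eigenvalue. -/
noncomputable def specRad {V : Type*} [Fintype V] [DecidableEq V] (G : SimpleGraph V) : ℝ := by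
  classical exact sSup (spectrum ℝ (G.adjMatrix ℝ))

/-- The join `G ∨ K_1`: add one new vertex (`none`) adjacent to every vertex of `G`. -/
def cone {V : Type*} (G : SimpleGraph V) : SimpleGraph (Option V) where
  Adj x y :=
    match x, y with
    | some a, some b => G.Adj a b
    | some _, none => True
    | none, some _ => True
    | none, none => False
  symm := ⟨by rintro (_ | a) (_ | b) h <;> simp_all <;> exact h.symm⟩
  loopless := ⟨by rintro (_ | a) h <;> simp_all⟩

/-- `G₁ = K_3 ∨ 5K_1` on `Fin 8`: the first three vertices form a dominating clique. -/
def G1 : SimpleGraph (Fin 8) where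
  Adj x y := x ≠ y ∧ (x.val < 3 ∨ y.val < 3)
  symm := ⟨by rintro x y ⟨hxy, h⟩; exact ⟨hxy.symm, by tauto⟩⟩
  loopless := ⟨by rintro x ⟨h, -⟩; exact h rfl⟩

/-- `G₂ = K_1 ∨ (K_5 ∪ 2K_1)` on `Fin 8`: vertex `0` is dominating and
vertices `1,…,5` form a clique. -/
def G2 : SimpleGraph (Fin 8) where
  Adj x y := x ≠ y ∧ (x.val = 0 ∨ y.val = 0 ∨ (x.val ≤ 5 ∧ y.val ≤ 5))
  symm := ⟨by rintro x y ⟨hxy, h⟩; exact ⟨hxy.symm, by tauto⟩⟩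
  loopless := ⟨by rintro x ⟨h, -⟩; exact h rfl⟩

open Matrix Polynomial

instance instDecG1 : DecidableRel G1.Adj := fun x y =>
  decidable_of_iff (x ≠ y ∧ (x.val < 3 ∨ y.val < 3)) Iff.rfl

instance instDecG2 : DecidableRel G2.Adj := fun x y =>
  decidable_of_iff (x ≠ y ∧ (x.val = 0 ∨ y.val = 0 ∨ (x.val ≤ 5 ∧ y.val ≤ 5))) Iff.rfl

instance instDecCone {V : Type*} {G : SimpleGraph V} [DecidableRel G.Adj] :
    DecidableRel (cone G).Adj := fun x y =>
  match x, y with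
  | some a, some b => decidable_of_iff (G.Adj a b) Iff.rfl
  | some _, none => Decidable.isTrue trivial
  | none, some _ => Decidable.isTrue trivial
  | none, none => Decidable.isFalse id

lemma specRad_eq {V : Type*} [Fintype V] [DecidableEq V] (G : SimpleGraph V)
    [h : DecidableRel G.Adj] :
    specRad G = sSup (spectrum ℝ (G.adjMatrix ℝ)) := by
  unfold specRad
  congr!

lemma adjMatrix_map {V : Type*} [Fintype V] [DecidableEq V] (G : SimpleGraph V)
    [DecidableRel G.Adj] :
    (G.adjMatrix ℤ).map ((Int.cast : ℤ → ℝ)) = G.adjMatrix ℝ := by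
  ext i j
  simp [Matrix.map_apply, apply_ite (Int.cast : ℤ → ℝ)]

/-- If `p(A) = 0` then every element of the spectrum of `A` is a root of `p`. -/
lemma eval_zero_of_specmem {n : Type*} [Fintype n] [DecidableEq n] [Nonempty n]
    (A : Matrix n n ℝ) (p : ℝ[X]) (hA : aeval A p = 0) {μ : ℝ} (hμ : μ ∈ spectrum ℝ A) :
    p.eval μ = 0 := by
  have h := spectrum.subset_polynomial_aeval A p ⟨μ, hμ, rfl⟩
  rw [hA, spectrum.zero_eq] at h
  exact h

/-- An eigenvalue (with explicit eigenvector) belongs to the spectrum. -/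
lemma specmem_of_eigenvector {n : Type*} [Fintype n] [DecidableEq n]
    (A : Matrix n n ℝ) {μ : ℝ} {v : n → ℝ} (hv : v ≠ 0) (h : A *ᵥ v = μ • v) :
    μ ∈ spectrum ℝ A := by
  rw [spectrum.mem_iff]
  rintro hU
  obtain ⟨u, hu⟩ := hU
  apply hv
  have h0 : (algebraMap ℝ (Matrix n n ℝ) μ - A) *ᵥ v = 0 := by
    rw [Matrix.sub_mulVec, h, Algebra.algebraMap_eq_smul_one, Matrix.smul_mulVec,
      Matrix.one_mulVec, sub_self]
  calc v = (1 : Matrix n n ℝ) *ᵥ v := (Matrix.one_mulVec v).symm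
    _ = ((↑u⁻¹ * ↑u : Matrix n n ℝ)) *ᵥ v := by rw [Units.inv_mul]
    _ = (↑u⁻¹ : Matrix n n ℝ) *ᵥ ((↑u : Matrix n n ℝ) *ᵥ v) := (Matrix.mulVec_mulVec _ _ _).symm
    _ = 0 := by rw [hu, h0, Matrix.mulVec_zero]

/-! ### Minimal-polynomial identities, verified over `ℤ` and transported to `ℝ`. -/

section Identities

lemma hA1 : ((G1.adjMatrix ℝ)^2 - 2*(G1.adjMatrix ℝ) - 15) * ((G1.adjMatrix ℝ) + 1)
    * (G1.adjMatrix ℝ) = 0 := by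
  have hZ : ((G1.adjMatrix ℤ)^2 - 2*(G1.adjMatrix ℤ) - 15) * ((G1.adjMatrix ℤ) + 1)
      * (G1.adjMatrix ℤ) = 0 := by decide
  have h := congrArg (Int.castRingHom ℝ).mapMatrix hZ
  simp only [_root_.map_mul, map_sub, map_add, map_pow, _root_.map_one, map_zero,
    map_ofNat] at h
  rw [RingHom.mapMatrix_apply] at h
  rwa [show ((Int.castRingHom ℝ) : ℤ → ℝ) = (Int.cast : ℤ → ℝ) from rfl, adjMatrix_map] at h

lemma hA2 : ((G2.adjMatrix ℝ)^3 - 4*(G2.adjMatrix ℝ)^2 - 7*(G2.adjMatrix ℝ) + 8)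
    * ((G2.adjMatrix ℝ) + 1) * (G2.adjMatrix ℝ) = 0 := by
  have hZ : ((G2.adjMatrix ℤ)^3 - 4*(G2.adjMatrix ℤ)^2 - 7*(G2.adjMatrix ℤ) + 8)
      * ((G2.adjMatrix ℤ) + 1) * (G2.adjMatrix ℤ) = 0 := by decide
  have h := congrArg (Int.castRingHom ℝ).mapMatrix hZ
  simp only [_root_.map_mul, map_sub, map_add, map_pow, _root_.map_one, map_zero,
    map_ofNat] at h
  rw [RingHom.mapMatrix_apply] at h
  rwa [show ((Int.castRingHom ℝ) : ℤ → ℝ) = (Int.cast : ℤ → ℝ) from rfl, adjMatrix_map] at h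

set_option maxRecDepth 10000 in
lemma hC1 : (((cone G1).adjMatrix ℝ)^2 - 3*((cone G1).adjMatrix ℝ) - 20)
    * (((cone G1).adjMatrix ℝ) + 1) * ((cone G1).adjMatrix ℝ) = 0 := by
  have hZ : (((cone G1).adjMatrix ℤ)^2 - 3*((cone G1).adjMatrix ℤ) - 20)
      * (((cone G1).adjMatrix ℤ) + 1) * ((cone G1).adjMatrix ℤ) = 0 := by decide
  have h := congrArg (Int.castRingHom ℝ).mapMatrix hZ
  simp only [_root_.map_mul, map_sub, map_add, map_pow, _root_.map_one, map_zero,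
    map_ofNat] at h
  rw [RingHom.mapMatrix_apply] at h
  rwa [show ((Int.castRingHom ℝ) : ℤ → ℝ) = (Int.cast : ℤ → ℝ) from rfl, adjMatrix_map] at h

set_option maxRecDepth 10000 in
lemma hC2 : (((cone G2).adjMatrix ℝ)^3 - 5*((cone G2).adjMatrix ℝ)^2
    - 10*((cone G2).adjMatrix ℝ) + 16)
    * (((cone G2).adjMatrix ℝ) + 1) * ((cone G2).adjMatrix ℝ) = 0 := by
  have hZ : (((cone G2).adjMatrix ℤ)^3 - 5*((cone G2).adjMatrix ℤ)^2
      - 10*((cone G2).adjMatrix ℤ) + 16)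
      * (((cone G2).adjMatrix ℤ) + 1) * ((cone G2).adjMatrix ℤ) = 0 := by decide
  have h := congrArg (Int.castRingHom ℝ).mapMatrix hZ
  simp only [_root_.map_mul, map_sub, map_add, map_pow, _root_.map_one, map_zero,
    map_ofNat] at h
  rw [RingHom.mapMatrix_apply] at h
  rwa [show ((Int.castRingHom ℝ) : ℤ → ℝ) = (Int.cast : ℤ → ℝ) from rfl, adjMatrix_map] at h

end Identities

/-! ### Spectrum bounds. -/

lemma specG1_le {μ : ℝ} (hμ : μ ∈ spectrum ℝ (G1.adjMatrix ℝ)) : μ ≤ 5 := by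
  have hp : aeval (G1.adjMatrix ℝ) ((X^2 - 2*X - 15)*(X+1)*X : ℝ[X]) = 0 := by
    simp only [_root_.map_mul, map_sub, map_add, map_pow, aeval_X, _root_.map_one, map_ofNat]
    exact hA1
  have h := eval_zero_of_specmem _ _ hp hμ
  simp only [eval_mul, eval_sub, eval_add, eval_pow, eval_X, eval_one, eval_ofNat] at h
  rcases mul_eq_zero.mp h with h | h
  · rcases mul_eq_zero.mp h with h | h
    · have h5 : (μ - 5) * (μ + 3) = 0 := by linear_combination h
      rcases mul_eq_zero.mp h5 with h | h <;> linarith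
    · linarith
  · linarith

lemma specG2_le {μ : ℝ} (hμ : μ ∈ spectrum ℝ (G2.adjMatrix ℝ)) : μ ≤ 6 := by
  have hp : aeval (G2.adjMatrix ℝ) ((X^3 - 4*X^2 - 7*X + 8)*(X+1)*X : ℝ[X]) = 0 := by
    simp only [_root_.map_mul, map_sub, map_add, map_pow, aeval_X, _root_.map_one, map_ofNat]
    exact hA2
  have h := eval_zero_of_specmem _ _ hp hμ
  simp only [eval_mul, eval_sub, eval_add, eval_pow, eval_X, eval_one, eval_ofNat] at h
  rcases mul_eq_zero.mp h with h | h
  · rcases mul_eq_zero.mp h with h | h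
    · by_contra hc
      push_neg at hc
      have key : (μ - 6) * ((μ + 1)^2 + 4) = -38 := by linear_combination h
      nlinarith [sq_nonneg (μ + 1)]
    · linarith
  · linarith

lemma specC1_le {μ : ℝ} (hμ : μ ∈ spectrum ℝ ((cone G1).adjMatrix ℝ)) : μ ≤ 7 := by
  have hp : aeval ((cone G1).adjMatrix ℝ) ((X^2 - 3*X - 20)*(X+1)*X : ℝ[X]) = 0 := by
    simp only [_root_.map_mul, map_sub, map_add, map_pow, aeval_X, _root_.map_one, map_ofNat]
    exact hC1
  have h := eval_zero_of_specmem _ _ hp hμ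
  simp only [eval_mul, eval_sub, eval_add, eval_pow, eval_X, eval_one, eval_ofNat] at h
  rcases mul_eq_zero.mp h with h | h
  · rcases mul_eq_zero.mp h with h | h
    · by_contra hc
      push_neg at hc
      nlinarith
    · linarith
  · linarith

lemma specC2_le {μ : ℝ} (hμ : μ ∈ spectrum ℝ ((cone G2).adjMatrix ℝ)) : μ ≤ 31/5 := by
  have hp : aeval ((cone G2).adjMatrix ℝ) ((X^3 - 5*X^2 - 10*X + 16)*(X+1)*X : ℝ[X]) = 0 := by
    simp only [_root_.map_mul, map_sub, map_add, map_pow, aeval_X, _root_.map_one, map_ofNat]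
    exact hC2
  have h := eval_zero_of_specmem _ _ hp hμ
  simp only [eval_mul, eval_sub, eval_add, eval_pow, eval_X, eval_one, eval_ofNat] at h
  rcases mul_eq_zero.mp h with h | h
  · rcases mul_eq_zero.mp h with h | h
    · by_contra hc
      push_neg at hc
      have key : (μ - 31/5) * (μ^2 + 6/5*μ - 64/25) = -16/125 := by linear_combination h
      nlinarith [sq_nonneg μ]
    · linarith
  · linarith

/-! ### Explicit eigenvalues in the spectrum. -/

lemma mem5 : (5 : ℝ) ∈ spectrum ℝ (G1.adjMatrix ℝ) := by
  apply specmem_of_eigenvector (v := fun i => if i.val < 3 then (5:ℝ) else 3)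
  · intro h
    have := congrFun h (⟨0, by norm_num⟩ : Fin 8)
    norm_num at this
  · funext i
    fin_cases i <;>
      simp [Matrix.mulVec, dotProduct, Fin.sum_univ_succ, SimpleGraph.adjMatrix_apply] <;>
        simp [G1, Fin.ext_iff] <;>
      norm_num [show ((3:Fin 8):ℕ)=3 from rfl, show ((4:Fin 8):ℕ)=4 from rfl,
        show ((5:Fin 8):ℕ)=5 from rfl, show ((6:Fin 8):ℕ)=6 from rfl,
        show ((7:Fin 8):ℕ)=7 from rfl]

lemma memG2 : ∃ μ : ℝ, 5 < μ ∧ μ ∈ spectrum ℝ (G2.adjMatrix ℝ) := by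
  -- root of t³ - 4t² - 7t + 8 in (5, 51/10)
  obtain ⟨μ, hμIoo, hμ0⟩ : ∃ μ ∈ Set.Ioo (5:ℝ) (51/10),
      μ^3 - 4*μ^2 - 7*μ + 8 = 0 := by
    have hcont : ContinuousOn (fun t : ℝ => t^3 - 4*t^2 - 7*t + 8) (Set.Icc 5 (51/10)) := by
      fun_prop
    have h := intermediate_value_Ioo (by norm_num : (5:ℝ) ≤ 51/10) hcont
      (by norm_num : (0:ℝ) ∈ Set.Ioo ((5:ℝ)^3 - 4*(5:ℝ)^2 - 7*5 + 8)
        ((51/10:ℝ)^3 - 4*(51/10:ℝ)^2 - 7*(51/10) + 8))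
    obtain ⟨μ, hμ, hval⟩ := h
    exact ⟨μ, hμ, hval⟩
  have h5 : (5:ℝ) < μ := hμIoo.1
  refine ⟨μ, h5, ?_⟩
  apply specmem_of_eigenvector
    (v := fun i => if i.val = 0 then μ*(μ-4) else if i.val ≤ 5 then μ else μ-4)
  · intro h
    have := congrFun h (⟨1, by norm_num⟩ : Fin 8)
    norm_num at this
    linarith
  · funext i
    fin_cases i <;>
      simp [Matrix.mulVec, dotProduct, Fin.sum_univ_succ, SimpleGraph.adjMatrix_apply] <;>
        simp [G2, Fin.ext_iff, -Fin.val_eq_zero_iff] <;>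
      norm_num [show ((3:Fin 8):ℕ)=3 from rfl, show ((4:Fin 8):ℕ)=4 from rfl,
        show ((5:Fin 8):ℕ)=5 from rfl, show ((6:Fin 8):ℕ)=6 from rfl,
        show ((7:Fin 8):ℕ)=7 from rfl] <;>
      first
        | ring1
        | linear_combination hμ0
        | linear_combination -hμ0

lemma memC1 : ∃ μ : ℝ, 31/5 < μ ∧ μ ∈ spectrum ℝ ((cone G1).adjMatrix ℝ) := by
  set s := Real.sqrt 89 with hs
  have hs2 : s^2 = 89 := Real.sq_sqrt (by norm_num)
  have hsgt : (9.4:ℝ) < s := by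
    rw [hs, show (9.4:ℝ) = Real.sqrt (9.4^2) from (Real.sqrt_sq (by norm_num)).symm]
    apply Real.sqrt_lt_sqrt (by positivity)
    norm_num
  set μ := (3 + s)/2 with hμdef
  have hroot : μ^2 - 3*μ - 20 = 0 := by
    rw [hμdef]; field_simp; nlinarith [hs2]
  refine ⟨μ, by rw [hμdef]; linarith, ?_⟩
  apply specmem_of_eigenvector
    (v := fun i => match i with
      | none => μ
      | some j => if j.val < 3 then μ else 4)
  · intro h
    have := congrFun h (none : Option (Fin 8))
    simp only [Pi.zero_apply] at this
    rw [hμdef] at this; linarith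
  · funext i
    rcases i with _ | i
    · simp [Matrix.mulVec, dotProduct, Fintype.sum_option, Fin.sum_univ_succ,
        SimpleGraph.adjMatrix_apply]
      simp [cone, G1, Fin.ext_iff]
      norm_num
      first
        | ring1
        | linear_combination hroot
        | linear_combination -hroot
        | linear_combination hs2/4
        | linear_combination -hs2/4
    · fin_cases i <;>
        simp [Matrix.mulVec, dotProduct, Fintype.sum_option, Fin.sum_univ_succ,
          SimpleGraph.adjMatrix_apply] <;>
          simp [cone, G1, Fin.ext_iff] <;>
        norm_num [show ((3:Fin 8):ℕ)=3 from rfl, show ((4:Fin 8):ℕ)=4 from rfl,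
          show ((5:Fin 8):ℕ)=5 from rfl, show ((6:Fin 8):ℕ)=6 from rfl,
          show ((7:Fin 8):ℕ)=7 from rfl] <;>
        first
          | ring1
          | linear_combination hroot
          | linear_combination -hroot
          | linear_combination hs2/4
          | linear_combination -hs2/4

lemma memC2 : ∃ μ : ℝ, 6 < μ ∧ μ ∈ spectrum ℝ ((cone G2).adjMatrix ℝ) := by
  obtain ⟨μ, hμIoo, hμ0⟩ : ∃ μ ∈ Set.Ioo (6:ℝ) (31/5),
      μ^3 - 5*μ^2 - 10*μ + 16 = 0 := by
    have hcont : ContinuousOn (fun t : ℝ => t^3 - 5*t^2 - 10*t + 16) (Set.Icc 6 (31/5)) := by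
      fun_prop
    have h := intermediate_value_Ioo (by norm_num : (6:ℝ) ≤ 31/5) hcont
      (by norm_num : (0:ℝ) ∈ Set.Ioo ((6:ℝ)^3 - 5*(6:ℝ)^2 - 10*6 + 16)
        ((31/5:ℝ)^3 - 5*(31/5:ℝ)^2 - 10*(31/5) + 16))
    obtain ⟨μ, hμ, hval⟩ := h
    exact ⟨μ, hμ, hval⟩
  have h6 : (6:ℝ) < μ := hμIoo.1
  refine ⟨μ, h6, ?_⟩
  apply specmem_of_eigenvector
    (v := fun i => match i with
      | none => μ*(μ-4)
      | some j => if j.val = 0 then μ*(μ-4) else if j.val ≤ 5 then 2*μ else 2*(μ-4))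
  · intro h
    have := congrFun h (some (⟨1, by norm_num⟩ : Fin 8))
    norm_num at this
    linarith
  · funext i
    rcases i with _ | i
    · simp [Matrix.mulVec, dotProduct, Fintype.sum_option, Fin.sum_univ_succ,
        SimpleGraph.adjMatrix_apply]
      simp [cone, G2, Fin.ext_iff, -Fin.val_eq_zero_iff]
      norm_num
      first
        | ring1
        | linear_combination hμ0
        | linear_combination -hμ0
    · fin_cases i <;>
        simp [Matrix.mulVec, dotProduct, Fintype.sum_option, Fin.sum_univ_succ,
          SimpleGraph.adjMatrix_apply] <;>
          simp [cone, G2, Fin.ext_iff, -Fin.val_eq_zero_iff] <;>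
        norm_num [show ((3:Fin 8):ℕ)=3 from rfl, show ((4:Fin 8):ℕ)=4 from rfl,
          show ((5:Fin 8):ℕ)=5 from rfl, show ((6:Fin 8):ℕ)=6 from rfl,
          show ((7:Fin 8):ℕ)=7 from rfl] <;>
        first
          | ring1
          | linear_combination hμ0
          | linear_combination -hμ0

/-- `λ(G₁) = 5 < λ(G₂)`, and yet `λ(G₁ ∨ K_1) > λ(G₂ ∨ K_1)`. -/
theorem stmt_14 :
    specRad G1 = 5 ∧ specRad G1 < specRad G2 ∧ specRad (cone G2) < specRad (cone G1) := by
  have hG1 : specRad G1 = 5 := by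
    rw [specRad_eq G1]
    apply le_antisymm
    · exact Real.sSup_le (fun x hx => specG1_le hx) (by norm_num)
    · exact le_csSup ⟨5, fun x hx => specG1_le hx⟩ mem5
  refine ⟨hG1, ?_, ?_⟩
  · rw [hG1, specRad_eq G2]
    obtain ⟨μ, h5, hmem⟩ := memG2
    calc (5:ℝ) < μ := h5
      _ ≤ sSup (spectrum ℝ (G2.adjMatrix ℝ)) :=
        le_csSup ⟨6, fun x hx => specG2_le hx⟩ hmem
  · rw [specRad_eq (cone G1), specRad_eq (cone G2)]
    obtain ⟨μ, h6, hmem⟩ := memC1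
    calc sSup (spectrum ℝ ((cone G2).adjMatrix ℝ)) ≤ 31/5 :=
        Real.sSup_le (fun x hx => specC2_le hx) (by norm_num)
      _ < μ := h6
      _ ≤ sSup (spectrum ℝ ((cone G1).adjMatrix ℝ)) :=
        le_csSup ⟨7, fun x hx => specC1_le hx⟩ hmem
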